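/- Let G be a graph with γ_R(G) = 2β(G) that is vertex Roman domination-critical, i.e., γ_R(G − x) < γ_R(G) for every vertex x. Then b_R(G) ≥ δ(G) + 1. -/

import Mathlib

open SimpleGraph Finset

/-- A Roman dominating function: values in {0,1,2}, every 0-vertex has a neighbor with value 2. -/
def IsRDF {V : Type*} (G : SimpleGraph V) (f : V → ℕ) : Prop :=
  (∀ v, f v ≤ 2) ∧ ∀ v, f v = 0 → ∃ u, G.Adj v u ∧ f u = 2

/-- The Roman domination number: minimum weight of a Roman dominating function. -/
noncomputable def romanDom {V : Type*} [Fintype V] (G : SimpleGraph V) : ℕ :=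
  sInf {k | ∃ f : V → ℕ, IsRDF G f ∧ ∑ v, f v = k}

/-- A dominating set. -/
def IsDomSet {V : Type*} (G : SimpleGraph V) (S : Set V) : Prop :=
  ∀ v, v ∈ S ∨ ∃ u ∈ S, G.Adj u v

/-- The domination number. -/
noncomputable def domNum {V : Type*} [Fintype V] (G : SimpleGraph V) : ℕ :=
  sInf {k | ∃ S : Set V, IsDomSet G S ∧ S.ncard = k}

/-- Degree of a vertex. -/
noncomputable def deg {V : Type*} (G : SimpleGraph V) (v : V) : ℕ :=
  (G.neighborSet v).ncard

/-- Maximum degree. -/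
noncomputable def maxDeg {V : Type*} (G : SimpleGraph V) : ℕ :=
  sSup {d | ∃ v, deg G v = d}

/-- Minimum degree. -/
noncomputable def minDeg {V : Type*} (G : SimpleGraph V) : ℕ :=
  sInf {d | ∃ v, deg G v = d}

/-- The Roman bondage number: minimum size of an edge set whose deletion increases `romanDom`. -/
noncomputable def romanBondage {V : Type*} [Fintype V] (G : SimpleGraph V) : ℕ :=
  sInf {k | ∃ B : Set (Sym2 V), B ⊆ G.edgeSet ∧
    romanDom (G.deleteEdges B) > romanDom G ∧ B.ncard = k}

/-- The bondage number: minimum size of an edge set whose deletion increases `domNum`. -/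
noncomputable def bondage {V : Type*} [Fintype V] (G : SimpleGraph V) : ℕ :=
  sInf {k | ∃ B : Set (Sym2 V), B ⊆ G.edgeSet ∧
    domNum (G.deleteEdges B) > domNum G ∧ B.ncard = k}

/-- A vertex cover. -/
def IsVC {V : Type*} (G : SimpleGraph V) (S : Set V) : Prop :=
  ∀ u v, G.Adj u v → u ∈ S ∨ v ∈ S

/-- The vertex covering number. -/
noncomputable def vcNum {V : Type*} [Fintype V] (G : SimpleGraph V) : ℕ :=
  sInf {k | ∃ S : Set V, IsVC G S ∧ S.ncard = k}

lemma one_isRDF {V : Type*} (G : SimpleGraph V) : IsRDF G (fun _ => 1) :=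
  ⟨fun _ => one_le_two, fun _ h => absurd h one_ne_zero⟩

lemma romanDom_le {V : Type*} [Fintype V] (G : SimpleGraph V) {f : V → ℕ}
    (hf : IsRDF G f) : romanDom G ≤ ∑ v, f v :=
  Nat.sInf_le ⟨f, hf, rfl⟩

lemma romanDom_spec {V : Type*} [Fintype V] (G : SimpleGraph V) :
    ∃ f : V → ℕ, IsRDF G f ∧ ∑ v, f v = romanDom G :=
  Nat.sInf_mem (s := {k | ∃ f : V → ℕ, IsRDF G f ∧ ∑ v, f v = k})
    ⟨_, ⟨(fun _ => 1), one_isRDF G, rfl⟩⟩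

lemma vcNum_spec {V : Type*} [Fintype V] (G : SimpleGraph V) :
    ∃ S : Set V, IsVC G S ∧ S.ncard = vcNum G :=
  Nat.sInf_mem (s := {k | ∃ S : Set V, IsVC G S ∧ S.ncard = k})
    ⟨_, ⟨Set.univ, fun _ _ _ => Or.inl trivial, rfl⟩⟩

lemma key_lemma {V : Type*} [Fintype V] [DecidableEq V] (G : SimpleGraph V)
    (hβ : romanDom G = 2 * vcNum G)
    (hvrc : ∀ x : V, romanDom (G.induce {y | y ≠ x}) < romanDom G)
    (B : Set (Sym2 V)) (hcard : B.ncard ≤ minDeg G) :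
    romanDom (G.deleteEdges B) ≤ romanDom G := by
  classical
  by_cases hiso : ∃ v : V, ∀ u, ¬ (G.deleteEdges B).Adj v u
  · obtain ⟨v, hv⟩ := hiso
    -- B is exactly the star of v
    set star : Set (Sym2 V) := (fun u => s(v, u)) '' G.neighborSet v with hstar_def
    have hsub : star ⊆ B := by
      rintro e ⟨u, hu, rfl⟩
      have hadj : G.Adj v u := hu
      have := hv u
      rw [deleteEdges_adj] at this
      push_neg at this
      exact this hadj
    have hstarcard : star.ncard = deg G v := by
      apply Set.ncard_image_of_injOn
      intro a _ b _ hab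
      exact Sym2.congr_right.mp hab
    have hmle : minDeg G ≤ deg G v := Nat.sInf_le ⟨v, rfl⟩
    have hBeq : star = B :=
      Set.eq_of_subset_of_ncard_le hsub
        (by rw [hstarcard]; exact hcard.trans hmle) (Set.toFinite B)
    have hmemv : ∀ e ∈ B, v ∈ e := by
      rintro e he
      rw [← hBeq] at he
      obtain ⟨u, _, rfl⟩ := he
      exact Sym2.mem_mk_left v u
    have hadj2 : ∀ u w : V, u ≠ v → w ≠ v → G.Adj u w → (G.deleteEdges B).Adj u w := by
      intro u w hu hw h
      rw [deleteEdges_adj]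
      refine ⟨h, fun hmem => ?_⟩
      rcases Sym2.mem_iff.mp (hmemv _ hmem) with h1 | h1
      · exact hu h1.symm
      · exact hw h1.symm
    obtain ⟨g, hg, hgsum⟩ := romanDom_spec (G.induce {y | y ≠ v})
    have hlt : romanDom (G.induce {y | y ≠ v}) < romanDom G := hvrc v
    set f : V → ℕ := fun u => if h : u = v then 1 else g ⟨u, h⟩ with hf_def
    have hfRDF : IsRDF (G.deleteEdges B) f := by
      constructor
      · intro u
        by_cases h : u = v
        · simp [hf_def, h]
        · simpa [hf_def, h] using hg.1 ⟨u, h⟩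
      · intro u hu0
        by_cases h : u = v
        · simp [hf_def, h] at hu0
        · have : g ⟨u, h⟩ = 0 := by simpa [hf_def, h] using hu0
          obtain ⟨w, hw, hw2⟩ := hg.2 ⟨u, h⟩ this
          have hwv : (w : V) ≠ v := w.prop
          refine ⟨w.val, hadj2 u w.val h hwv ?_, ?_⟩
          · exact hw
          · simpa [hf_def, hwv] using hw2
    have hsum : ∑ u, f u = 1 + ∑ w, g w := by
      rw [← Finset.add_sum_erase Finset.univ f (Finset.mem_univ v)]
      congr 1
      · simp [hf_def]
      · rw [Finset.sum_subtype (p := fun y => y ∈ {y : V | y ≠ v}) (univ.erase v)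
          (by intro x; simp) f]
        apply Finset.sum_congr rfl
        intro x _
        simp only [hf_def]
        rw [dif_neg x.prop]
    have := romanDom_le (G.deleteEdges B) hfRDF
    omega
  · push_neg at hiso
    obtain ⟨S, hS, hScard⟩ := vcNum_spec G
    set f : V → ℕ := fun u => if u ∈ S then 2 else 0 with hf_def
    have hfRDF : IsRDF (G.deleteEdges B) f := by
      constructor
      · intro u
        by_cases h : u ∈ S <;> simp [hf_def, h]
      · intro u hu0
        have hu : u ∉ S := by
          by_contra h; simp [hf_def, h] at hu0
        obtain ⟨w, hw⟩ := hiso u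
        have hGadj : G.Adj u w := (deleteEdges_adj.mp hw).1
        have hwS : w ∈ S := by
          rcases hS u w hGadj with h | h
          · exact absurd h hu
          · exact h
        exact ⟨w, hw, by simp [hf_def, hwS]⟩
    have hsum : ∑ u, f u = 2 * S.ncard := by
      rw [Set.ncard_eq_toFinset_card' S]
      rw [← Set.filter_mem_univ_eq_toFinset S]
      rw [hf_def]
      rw [← Finset.sum_filter]
      rw [Finset.sum_const, smul_eq_mul, mul_comm]
    have := romanDom_le (G.deleteEdges B) hfRDF
    rw [hsum, hScard, ← hβ] at this
    exact this

theorem stmt15 {V : Type*} [Fintype V] [DecidableEq V] (G : SimpleGraph V)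
    (hΔ : 2 ≤ maxDeg G) (hβ : romanDom G = 2 * vcNum G)
    (hvrc : ∀ x : V, romanDom (G.induce {y | y ≠ x}) < romanDom G) :
    minDeg G + 1 ≤ romanBondage G := by
  classical
  -- V is nonempty and there is a vertex of degree ≥ 2
  have hVne : Nonempty V := by
    by_contra h
    rw [not_nonempty_iff] at h
    have : {d | ∃ v, deg G v = d} = ∅ := by
      ext d; simp only [Set.mem_setOf_eq, Set.mem_empty_iff_false, iff_false]
      rintro ⟨v, -⟩; exact h.false v
    rw [maxDeg, this] at hΔ
    simp [csSup_empty] at hΔ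
  have hbdd : BddAbove {d | ∃ v, deg G v = d} := by
    refine ⟨Fintype.card V, ?_⟩
    rintro d ⟨v, rfl⟩
    have : (G.neighborSet v).ncard ≤ (Set.univ : Set V).ncard :=
      Set.ncard_le_ncard (Set.subset_univ _) (Set.toFinite _)
    simpa [deg, Set.ncard_univ] using this
  have hmem := Nat.sSup_mem (s := {d | ∃ v, deg G v = d})
    ⟨deg G hVne.some, hVne.some, rfl⟩ hbdd
  obtain ⟨v, hvdeg⟩ := hmem
  have hv2 : 2 ≤ deg G v := by rw [hvdeg]; exact hΔ
  -- two distinct neighbors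
  obtain ⟨a, ha, b, hb, hab⟩ := (Set.one_lt_ncard (Set.toFinite _)).mp (by
    have : (1:ℕ) < deg G v := by omega
    exact this)
  have hva : G.Adj v a := ha
  have hvb : G.Adj v b := hb
  have hav : a ≠ v := (G.ne_of_adj hva).symm
  have hbv : b ≠ v := (G.ne_of_adj hvb).symm
  -- romanDom G < card V
  have hlt : romanDom G < Fintype.card V := by
    set f : V → ℕ := fun u => if u = v then 2 else if u = a ∨ u = b then 0 else 1 with hf_def
    have hfRDF : IsRDF G f := by
      constructor
      · intro u
        by_cases h1 : u = v
        · simp [hf_def, h1]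
        · by_cases h2 : u = a ∨ u = b <;> simp [hf_def, h1, h2]
      · intro u hu0
        have h1 : u ≠ v := by rintro rfl; simp [hf_def] at hu0
        have h2 : u = a ∨ u = b := by
          by_contra h; simp [hf_def, h1, h] at hu0
        refine ⟨v, ?_, by simp [hf_def]⟩
        rcases h2 with rfl | rfl
        · exact hva.symm
        · exact hvb.symm
    have hle := romanDom_le G hfRDF
    set t : Finset V := {v, a, b} with ht_def
    have htcard : t.card = 3 := by
      rw [ht_def]
      rw [Finset.card_insert_of_notMem (by simp [hav.symm, hbv.symm]),
        Finset.card_insert_of_notMem (by simp [hab]), Finset.card_singleton]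
    have htsub : t ⊆ Finset.univ := Finset.subset_univ t
    have hsplit : ∑ u ∈ Finset.univ \ t, f u + ∑ u ∈ t, f u = ∑ u, f u :=
      Finset.sum_sdiff htsub
    have hsumt : ∑ u ∈ t, f u = 2 := by
      rw [ht_def]
      rw [Finset.sum_insert (by simp [hav.symm, hbv.symm]),
        Finset.sum_insert (by simp [hab]), Finset.sum_singleton]
      simp [hf_def, hav, hbv]
    have hrest : ∑ u ∈ Finset.univ \ t, f u ≤ (Finset.univ \ t).card := by
      calc ∑ u ∈ Finset.univ \ t, f u ≤ ∑ _u ∈ Finset.univ \ t, 1 := by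
            apply Finset.sum_le_sum
            intro u hu
            have h1 : u ≠ v := by
              rintro rfl
              simp [ht_def] at hu
            by_cases h2 : u = a ∨ u = b <;> simp [hf_def, h1, h2]
        _ = (Finset.univ \ t).card := by simp
    have hcard3 : 3 ≤ Fintype.card V := by
      rw [← htcard, ← Finset.card_univ]
      exact Finset.card_le_card htsub
    have hsd : (Finset.univ \ t).card = Fintype.card V - 3 := by
      rw [Finset.card_sdiff_of_subset htsub, htcard, Finset.card_univ]
    omega
  -- the bondage set is nonempty: deleting all edges increases romanDom
  have hdelall : Fintype.card V ≤ romanDom (G.deleteEdges G.edgeSet) := by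
    obtain ⟨f, hf, hfsum⟩ := romanDom_spec (G.deleteEdges G.edgeSet)
    rw [← hfsum]
    calc Fintype.card V = ∑ _u : V, 1 := by simp
      _ ≤ ∑ u, f u := by
          apply Finset.sum_le_sum
          intro u _
          by_contra h
          have hu0 : f u = 0 := by omega
          obtain ⟨w, hw, -⟩ := hf.2 u hu0
          rw [deleteEdges_adj] at hw
          exact hw.2 ((mem_edgeSet (G := G)).mpr hw.1)
  have hne : {k | ∃ B : Set (Sym2 V), B ⊆ G.edgeSet ∧
      romanDom (G.deleteEdges B) > romanDom G ∧ B.ncard = k}.Nonempty :=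
    ⟨G.edgeSet.ncard, G.edgeSet, subset_rfl, lt_of_lt_of_le hlt hdelall, rfl⟩
  have hmemB : ∃ B : Set (Sym2 V), B ⊆ G.edgeSet ∧
      romanDom (G.deleteEdges B) > romanDom G ∧ B.ncard = romanBondage G :=
    Nat.sInf_mem hne
  obtain ⟨B, hBsub, hBgt, hBcard⟩ := hmemB
  by_contra hcon
  push_neg at hcon
  have hble : B.ncard ≤ minDeg G := by
    rw [hBcard]
    omega
  exact absurd (key_lemma G hβ hvrc B hble) (not_le.mpr hBgt)
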